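/- Let U : ℝ^d → ℝ be differentiable with L-Lipschitz gradient and global minimizer θ* = 0, β > 0 with Z_β = ∫ exp(-βU) < ∞, and suppose the Gibbs measure π_θ ∝ exp(-βU) has second moment ∫‖θ‖² dπ_θ ≤ C_β/β where C_β is a constant independent of β (with C_β ≥ d e/L). Then Ū_β - U(θ*) = O(1/β) as β → ∞; more precisely, β(Ū_β - U(θ*)) ≤ (d/2) log(e C_β L / d) for all β > 0. -/

import Mathlib

open Real MeasureTheory

-- Gaussian integrability on EuclideanSpace
lemma gauss_int {d : ℕ} {b : ℝ} (hb : 0 < b) :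
    Integrable (fun θ : EuclideanSpace ℝ (Fin d) => Real.exp (-(b * ‖θ‖ ^ 2))) := by
  have h := (GaussianFourier.integrable_cexp_neg_mul_sq_norm_add
    (V := EuclideanSpace ℝ (Fin d)) (b := (b : ℂ)) (by simpa using hb) 0 0).norm
  have h2 : (fun θ : EuclideanSpace ℝ (Fin d) => Real.exp (-(b * ‖θ‖ ^ 2)))
      = fun a : EuclideanSpace ℝ (Fin d) => rexp (-(b * ((‖a‖:ℂ) ^ 2).re)) := by
    funext a
    norm_num [← Complex.ofReal_pow]
  rw [h2]
  simpa [Complex.norm_exp, neg_mul] using h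

lemma gauss_val {d : ℕ} {b : ℝ} (hb : 0 < b) :
    ∫ θ : EuclideanSpace ℝ (Fin d), Real.exp (-(b * ‖θ‖ ^ 2))
      = (π / b) ^ ((d : ℝ) / 2) := by
  have h := GaussianFourier.integral_rexp_neg_mul_sq_norm
    (V := EuclideanSpace ℝ (Fin d)) hb
  simpa [finrank_euclideanSpace_fin, neg_mul] using h

lemma descent_aux {d : ℕ} (U : EuclideanSpace ℝ (Fin d) → ℝ) (L : ℝ) (hL : 0 < L)
    (hdiff : Differentiable ℝ U)
    (hlip : ∀ θ θ' : EuclideanSpace ℝ (Fin d),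
      ‖gradient U θ - gradient U θ'‖ ≤ L * ‖θ - θ'‖)
    (hmin : ∀ θ, U (0 : EuclideanSpace ℝ (Fin d)) ≤ U θ)
    (θ : EuclideanSpace ℝ (Fin d)) :
    U θ ≤ U (0 : EuclideanSpace ℝ (Fin d)) + L / 2 * ‖θ‖ ^ 2 := by
  have hloc : IsLocalMin U 0 := Filter.Eventually.of_forall hmin
  have hf0 : fderiv ℝ U 0 = 0 := hloc.fderiv_eq_zero
  have hg0 : gradient U (0 : EuclideanSpace ℝ (Fin d)) = 0 := by
    simp [gradient, hf0]
  have hfg : ∀ (x y : EuclideanSpace ℝ (Fin d)),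
      fderiv ℝ U x y = @inner ℝ _ _ (gradient U x) y := fun x y =>
    (InnerProductSpace.toDual_symm_apply).symm
  set f' : ℝ → ℝ := fun t => @inner ℝ _ _ (gradient U (t • θ)) θ with hf'
  have hderiv : ∀ t : ℝ, HasDerivAt (fun t : ℝ => U (t • θ)) (f' t) t := by
    intro t
    have h1 : HasDerivAt (fun t : ℝ => t • θ) θ t := by
      simpa using (hasDerivAt_id t).smul_const θ
    have h2 := ((hdiff (t • θ)).hasFDerivAt).comp_hasDerivAt t h1
    rw [hfg] at h2
    exact h2
  have hgc : Continuous (gradient U) := by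
    have : LipschitzWith (Real.toNNReal L) (gradient U) :=
      LipschitzWith.of_dist_le_mul (fun x y => by
        rw [dist_eq_norm, dist_eq_norm, Real.coe_toNNReal _ hL.le]; exact hlip x y)
    exact this.continuous
  have hcont : Continuous f' :=
    (hgc.comp ((continuous_id.smul continuous_const) :
      Continuous fun t : ℝ => t • θ)).inner continuous_const
  have hftc : U ((1:ℝ) • θ) - U ((0:ℝ) • θ) = ∫ t in (0:ℝ)..1, f' t :=
    (intervalIntegral.integral_eq_sub_of_hasDerivAt (fun t _ => hderiv t)
      (hcont.intervalIntegrable 0 1)).symm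
  have hbound : ∫ t in (0:ℝ)..1, f' t ≤ ∫ t in (0:ℝ)..1, L * ‖θ‖ ^ 2 * t := by
    apply intervalIntegral.integral_mono_on zero_le_one (hcont.intervalIntegrable 0 1)
      (by apply Continuous.intervalIntegrable; continuity)
    intro t ht
    have h1 : f' t = @inner ℝ _ _ (gradient U (t • θ) - gradient U 0) θ := by
      rw [hg0]; simp [hf']
    rw [h1]
    calc @inner ℝ _ _ (gradient U (t • θ) - gradient U 0) θ
        ≤ ‖gradient U (t • θ) - gradient U 0‖ * ‖θ‖ := real_inner_le_norm _ _
      _ ≤ (L * ‖t • θ - 0‖) * ‖θ‖ :=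
          mul_le_mul_of_nonneg_right (hlip _ _) (norm_nonneg θ)
      _ = L * ‖θ‖ ^ 2 * t := by
          rw [sub_zero, norm_smul]
          simp only [Real.norm_eq_abs, abs_of_nonneg ht.1]
          ring
  have hval : ∫ t in (0:ℝ)..1, L * ‖θ‖ ^ 2 * t = L / 2 * ‖θ‖ ^ 2 := by
    rw [intervalIntegral.integral_const_mul, integral_id]
    ring
  have h0 : ((0:ℝ)) • θ = 0 := by simp
  have h1' : ((1:ℝ)) • θ = θ := by simp
  rw [h0, h1'] at hftc
  linarith [hbound, hval, hftc]

theorem stmt_7 {d : ℕ} (hd : 0 < d) (U : EuclideanSpace ℝ (Fin d) → ℝ)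
    (L Cβ : ℝ) (hL : 0 < L)
    (hCβ : (d : ℝ) * Real.exp 1 / L ≤ Cβ)
    (hdiff : Differentiable ℝ U)
    (hlip : ∀ θ θ' : EuclideanSpace ℝ (Fin d),
      ‖gradient U θ - gradient U θ'‖ ≤ L * ‖θ - θ'‖)
    (hmin : ∀ θ, U (0 : EuclideanSpace ℝ (Fin d)) ≤ U θ) :
    ∀ β : ℝ, 0 < β →
    ∀ ρ : EuclideanSpace ℝ (Fin d) → ℝ,
      (∀ θ, ρ θ = Real.exp (-(β * U θ)) /
        ∫ θ' : EuclideanSpace ℝ (Fin d), Real.exp (-(β * U θ'))) →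
      Integrable (fun θ : EuclideanSpace ℝ (Fin d) => Real.exp (-(β * U θ))) →
      Integrable (fun θ : EuclideanSpace ℝ (Fin d) => U θ * ρ θ) →
      Integrable (fun θ : EuclideanSpace ℝ (Fin d) => ‖θ‖ ^ 2 * ρ θ) →
      (∫ θ : EuclideanSpace ℝ (Fin d), ‖θ‖ ^ 2 * ρ θ) ≤ Cβ / β →
      β * ((∫ θ : EuclideanSpace ℝ (Fin d), U θ * ρ θ) -
          U (0 : EuclideanSpace ℝ (Fin d))) ≤
        (d : ℝ) / 2 * Real.log (Real.exp 1 * Cβ * L / d) := by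
  intro β hβ ρ hρdef hexpint hUρint hnρint hmom
  have hd' : (0:ℝ) < d := Nat.cast_pos.mpr hd
  have hCβ0 : 0 < Cβ := lt_of_lt_of_le (by positivity) hCβ
  set Z := ∫ θ' : EuclideanSpace ℝ (Fin d), Real.exp (-(β * U θ')) with hZdef
  haveI : NeZero (volume : Measure (EuclideanSpace ℝ (Fin d))) :=
    ⟨fun h => by
      simpa [h] using
        (isOpen_univ.measure_pos (volume : Measure (EuclideanSpace ℝ (Fin d)))
          Set.univ_nonempty)⟩
  have hZpos : 0 < Z := integral_exp_pos hexpint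
  have hρint : Integrable ρ := by
    have h : ρ = fun θ => Real.exp (-(β * U θ)) / Z := funext hρdef
    rw [h]; exact hexpint.div_const Z
  have hρone : ∫ θ : EuclideanSpace ℝ (Fin d), ρ θ = 1 := by
    simp only [hρdef]
    rw [integral_div]
    exact div_self hZpos.ne'
  set A := ∫ θ : EuclideanSpace ℝ (Fin d), U θ * ρ θ with hAdef
  set M := ∫ θ : EuclideanSpace ℝ (Fin d), ‖θ‖ ^ 2 * ρ θ with hMdef
  set a := (d : ℝ) * β / (2 * Cβ) with hadef
  have ha : 0 < a := by positivity
  set G := (π / a) ^ ((d : ℝ) / 2) with hGdef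
  have hGpos : 0 < G := Real.rpow_pos_of_pos (by positivity) _
  have hGint := gauss_int (d := d) ha
  have hGval : ∫ θ : EuclideanSpace ℝ (Fin d), Real.exp (-(a * ‖θ‖ ^ 2)) = G :=
    gauss_val ha
  set c := Real.log Z - Real.log G with hcdef
  -- KL pointwise inequality
  have hKL : ∀ θ : EuclideanSpace ℝ (Fin d),
      β * (U θ * ρ θ) - a * (‖θ‖ ^ 2 * ρ θ) + c * ρ θ
        ≤ Real.exp (-(a * ‖θ‖ ^ 2)) / G - ρ θ := by
    intro θ
    have hρθ : 0 < ρ θ := by rw [hρdef]; positivity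
    set g := Real.exp (-(a * ‖θ‖ ^ 2)) / G with hgdef
    have hgθ : 0 < g := by positivity
    have hx : Real.log (g / ρ θ) ≤ g / ρ θ - 1 :=
      Real.log_le_sub_one_of_pos (by positivity)
    have hlogρ : Real.log (ρ θ) = -(β * U θ) - Real.log Z := by
      rw [hρdef, Real.log_div (Real.exp_ne_zero _) hZpos.ne', Real.log_exp]
    have hlogg : Real.log g = -(a * ‖θ‖ ^ 2) - Real.log G := by
      rw [hgdef, Real.log_div (Real.exp_ne_zero _) hGpos.ne', Real.log_exp]
    have hlogdiv : Real.log (g / ρ θ)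
        = (-(a * ‖θ‖ ^ 2) - Real.log G) - (-(β * U θ) - Real.log Z) := by
      rw [Real.log_div hgθ.ne' hρθ.ne', hlogρ, hlogg]
    have hm := mul_le_mul_of_nonneg_left hx hρθ.le
    have h1 : ρ θ * Real.log (g / ρ θ)
        = β * (U θ * ρ θ) - a * (‖θ‖ ^ 2 * ρ θ) + c * ρ θ := by
      rw [hlogdiv, hcdef]; ring
    have h2 : ρ θ * (g / ρ θ - 1) = g - ρ θ := by
      rw [mul_sub, mul_one, mul_div_cancel₀ _ hρθ.ne']
    rw [h1, h2] at hm
    exact hm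
  have hLint : Integrable (fun θ : EuclideanSpace ℝ (Fin d) =>
      β * (U θ * ρ θ) - a * (‖θ‖ ^ 2 * ρ θ) + c * ρ θ) :=
    ((hUρint.const_mul β).sub (hnρint.const_mul a)).add (hρint.const_mul c)
  have hRint : Integrable (fun θ : EuclideanSpace ℝ (Fin d) =>
      Real.exp (-(a * ‖θ‖ ^ 2)) / G - ρ θ) := (hGint.div_const G).sub hρint
  have hmono := integral_mono hLint hRint hKL
  have hLval : ∫ θ : EuclideanSpace ℝ (Fin d),
      (β * (U θ * ρ θ) - a * (‖θ‖ ^ 2 * ρ θ) + c * ρ θ)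
      = β * A - a * M + c := by
    have hf1 : Integrable (fun θ : EuclideanSpace ℝ (Fin d) => β * (U θ * ρ θ)) :=
      hUρint.const_mul β
    have hf2 : Integrable (fun θ : EuclideanSpace ℝ (Fin d) => a * (‖θ‖ ^ 2 * ρ θ)) :=
      hnρint.const_mul a
    have hf3 : Integrable (fun θ : EuclideanSpace ℝ (Fin d) => c * ρ θ) :=
      hρint.const_mul c
    have hf12 : Integrable (fun θ : EuclideanSpace ℝ (Fin d) =>
        β * (U θ * ρ θ) - a * (‖θ‖ ^ 2 * ρ θ)) := hf1.sub hf2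
    rw [integral_add hf12 hf3, integral_sub hf1 hf2,
      integral_const_mul, integral_const_mul, integral_const_mul, hρone, mul_one]
  have hRval : ∫ θ : EuclideanSpace ℝ (Fin d),
      (Real.exp (-(a * ‖θ‖ ^ 2)) / G - ρ θ) = 0 := by
    have hg1 : Integrable (fun θ : EuclideanSpace ℝ (Fin d) =>
        Real.exp (-(a * ‖θ‖ ^ 2)) / G) := hGint.div_const G
    rw [integral_sub hg1 hρint, integral_div, hGval, hρone, div_self hGpos.ne']
    ring
  rw [hLval, hRval] at hmono
  -- hmono : β * A - a * M + c ≤ 0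
  -- lower bound on Z
  have hb2 : 0 < β * L / 2 := by positivity
  set H := (π / (β * L / 2)) ^ ((d : ℝ) / 2) with hHdef
  have hHpos : 0 < H := Real.rpow_pos_of_pos (by positivity) _
  have hZlow : Real.exp (-(β * U 0)) * H ≤ Z := by
    have hptw : ∀ θ : EuclideanSpace ℝ (Fin d),
        Real.exp (-(β * U 0)) * Real.exp (-(β * L / 2 * ‖θ‖ ^ 2))
          ≤ Real.exp (-(β * U θ)) := by
      intro θ
      rw [← Real.exp_add]
      apply Real.exp_le_exp.mpr
      have hde := descent_aux U L hL hdiff hlip hmin θ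
      nlinarith [sq_nonneg ‖θ‖]
    have hint : Integrable (fun θ : EuclideanSpace ℝ (Fin d) =>
        Real.exp (-(β * U 0)) * Real.exp (-(β * L / 2 * ‖θ‖ ^ 2))) :=
      (gauss_int hb2).const_mul _
    have h := integral_mono hint hexpint hptw
    rwa [integral_const_mul, gauss_val hb2] at h
  have hlogZ : -(β * U 0) + Real.log H ≤ Real.log Z := by
    have h := Real.log_le_log (by positivity) hZlow
    rwa [Real.log_mul (Real.exp_ne_zero _) hHpos.ne', Real.log_exp] at h
  have haM : a * M ≤ (d : ℝ) / 2 := by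
    have h := mul_le_mul_of_nonneg_left hmom ha.le
    have h2 : a * (Cβ / β) = (d : ℝ) / 2 := by
      rw [hadef]; field_simp
    linarith
  -- log computations
  have hlogG : Real.log G = (d : ℝ) / 2 * Real.log (π / a) :=
    Real.log_rpow (by positivity) _
  have hlogH : Real.log H = (d : ℝ) / 2 * Real.log (π / (β * L / 2)) :=
    Real.log_rpow (by positivity) _
  have key : Real.log (π / a) - Real.log (π / (β * L / 2))
      = Real.log (Cβ * L / d) := by
    rw [← Real.log_div (by positivity) (by positivity)]
    congr 1
    rw [hadef]
    field_simp
  have he : Real.log (Real.exp 1 * Cβ * L / d) = 1 + Real.log (Cβ * L / d) := by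
    rw [show Real.exp 1 * Cβ * L / (d : ℝ) = Real.exp 1 * (Cβ * L / d) by ring,
      Real.log_mul (Real.exp_ne_zero 1) (by positivity), Real.log_exp]
  have hfinal : (d : ℝ) / 2 * Real.log (Real.exp 1 * Cβ * L / (d : ℝ))
      = (d : ℝ) / 2 + (d : ℝ) / 2 * Real.log (π / a)
        - (d : ℝ) / 2 * Real.log (π / (β * L / 2)) := by
    rw [he, ← key]; ring
  rw [hfinal]
  rw [hcdef] at hmono
  rw [hlogG] at hmono
  rw [hlogH] at hlogZ
  rw [mul_sub]
  linarith [hmono, hlogZ, haM]
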